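/- With P^{+,l} defined recursively in the Hecke algebra by P^{+,1} = 1 and P^{+,l+1} = P^{+,l}·([l+1]_q)^{−1}(q^{−l}·1 + [l]_q·T_l)·P^{+,l}, one has (P^{+,l})² = P^{+,l} and P^{+,l+1}·T_m = q·P^{+,l+1} = T_m·P^{+,l+1} for every m = 1,…,l. -/

import Mathlib

set_option maxHeartbeats 1000000

/-- The symmetric q-number `[m]_q = (q^m − q^{−m})/(q − q⁻¹)`. -/
noncomputable def qnum (q : ℝ) (m : ℕ) : ℝ := (q ^ (m : ℤ) - q ^ (-(m : ℤ))) / (q - q⁻¹)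

/-- The q-symmetrizers in the Hecke algebra: `P^{+,1} = 1` and
`P^{+,l+1} = P^{+,l} · [l+1]_q⁻¹ (q^{−l}·1 + [l]_q T_l) · P^{+,l}`. -/
noncomputable def symP {A : Type*} [Ring A] [Algebra ℝ A] (q : ℝ) (T : ℕ → A) :
    ℕ → A
  | 0 => 1
  | l + 1 =>
      symP q T l *
        ((qnum q (l + 1))⁻¹ • ((q ^ (-(l : ℤ)) : ℝ) • (1 : A) + qnum q l • T l)) *
          symP q T l

lemma qnum_zero' (q : ℝ) : qnum q 0 = 0 := by simp [qnum]

lemma qnum_one' (q : ℝ) (hd : q - q⁻¹ ≠ 0) : qnum q 1 = 1 := by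
  simp [qnum, div_self hd]

lemma hd_of' (q : ℝ) (h1 : qnum q 1 ≠ 0) : q - q⁻¹ ≠ 0 := by
  intro h; apply h1; simp [qnum, h]

lemma sq_ne' (q : ℝ) (hq : q ≠ 0) (hd : q - q⁻¹ ≠ 0) : q ^ 2 - 1 ≠ 0 := by
  intro h
  apply hd
  have h1 : q - q⁻¹ = (q ^ 2 - 1) / q := by field_simp
  rw [h1, h, zero_div]

lemma qnum_succ' (q : ℝ) (hq : q ≠ 0) (hd : q - q⁻¹ ≠ 0) (n : ℕ) :
    qnum q (n + 1) = q * qnum q n + q ^ (-(n : ℤ)) := by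
  have hy : q ^ (n : ℤ) ≠ 0 := zpow_ne_zero _ hq
  have h2 := sq_ne' q hq hd
  unfold qnum
  push_cast
  rw [zpow_add₀ hq, neg_add, zpow_add₀ hq, zpow_neg, zpow_neg, zpow_one]
  generalize q ^ (n : ℤ) = y at hy ⊢
  rw [mul_div_assoc', div_add' _ _ _ hd, div_eq_div_iff hd hd]
  field_simp
  ring

lemma zpow_shift' (q : ℝ) (hq : q ≠ 0) (l : ℕ) :
    (q ^ (-(l : ℤ)) : ℝ) = q * q ^ (-((l + 1 : ℕ) : ℤ)) := by
  push_cast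
  rw [neg_add, zpow_add₀ hq, zpow_neg, zpow_neg_one]
  field_simp

section Core
variable {A : Type*} [Ring A] [Algebra ℝ A]

lemma coreR (q u v a a' : ℝ) (P Q t s : A)
    (hPQ : P * Q = P)
    (hsq : t * t = (q - q⁻¹) • t + 1)
    (hbr : t * (s * t) = s * (t * s))
    (hPs : P * s = q • P)
    (hv : v = q * u) (ha : a = q * a' + v) (hq : q ≠ 0) :
    P * ((u • (1:A) + a • t) * ((v • (1:A) + a' • s) * (t * Q))) =
      q • (P * ((u • (1:A) + a • t) * ((v • (1:A) + a' • s) * Q))) := by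
  subst ha hv
  have h1 : ∀ x : A, P * (s * x) = q • (P * x) := fun x => by
    rw [← mul_assoc, hPs, smul_mul_assoc]
  have hsq' : ∀ x : A, t * (t * x) = (q - q⁻¹) • (t * x) + x := fun x => by
    rw [← mul_assoc, hsq, add_mul, smul_mul_assoc, one_mul]
  have hbr' : ∀ x : A, t * (s * (t * x)) = s * (t * (s * x)) := fun x => by
    have e1 : t * (s * (t * x)) = (t * (s * t)) * x := by rw [mul_assoc, mul_assoc]
    rw [e1, hbr, mul_assoc, mul_assoc]
  simp only [add_mul, mul_add, smul_mul_assoc, mul_smul_comm, smul_smul, smul_add, one_mul]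
  rw [hbr' Q, hsq' Q]
  simp only [h1, hPQ, mul_add, mul_smul_comm, smul_smul, smul_add]
  match_scalars <;> field_simp <;> ring

lemma coreL (q u v a a' : ℝ) (P Q t s : A)
    (hQP : Q * P = P)
    (hsq : t * t = (q - q⁻¹) • t + 1)
    (hbr : t * (s * t) = s * (t * s))
    (hsP : s * P = q • P)
    (hv : v = q * u) (ha : a = q * a' + v) (hq : q ≠ 0) :
    Q * (t * ((v • (1:A) + a' • s) * ((u • (1:A) + a • t) * P))) =
      q • (Q * ((v • (1:A) + a' • s) * ((u • (1:A) + a • t) * P))) := by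
  subst ha hv
  have hsq' : ∀ x : A, t * (t * x) = (q - q⁻¹) • (t * x) + x := fun x => by
    rw [← mul_assoc, hsq, add_mul, smul_mul_assoc, one_mul]
  have hbr' : ∀ x : A, t * (s * (t * x)) = s * (t * (s * x)) := fun x => by
    have e1 : t * (s * (t * x)) = (t * (s * t)) * x := by rw [mul_assoc, mul_assoc]
    rw [e1, hbr, mul_assoc, mul_assoc]
  simp only [add_mul, mul_add, smul_mul_assoc, mul_smul_comm, smul_smul, smul_add, one_mul]
  rw [hbr' P, hsq' P]
  simp only [hsP, hQP, mul_add, mul_smul_comm, smul_smul, smul_add]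
  match_scalars <;> field_simp <;> ring

lemma coreI (q u v a a' b : ℝ) (P t s : A)
    (hPP : P * P = P)
    (hsq : t * t = (q - q⁻¹) • t + 1)
    (hbr : t * (s * t) = s * (t * s))
    (hPs : P * s = q • P) (hsP : s * P = q • P)
    (hv : v = q * u) (ha : a = q * a' + v) (hb : b = q * a + u) (hq : q ≠ 0) :
    P * ((u • (1:A) + a • t) * ((v • (1:A) + a' • s) * ((u • (1:A) + a • t) * P))) =
      (a * b) • (P * ((u • (1:A) + a • t) * P)) := by
  subst hb ha hv
  have h1 : ∀ x : A, P * (s * x) = q • (P * x) := fun x => by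
    rw [← mul_assoc, hPs, smul_mul_assoc]
  have hsq' : ∀ x : A, t * (t * x) = (q - q⁻¹) • (t * x) + x := fun x => by
    rw [← mul_assoc, hsq, add_mul, smul_mul_assoc, one_mul]
  have hbr' : ∀ x : A, t * (s * (t * x)) = s * (t * (s * x)) := fun x => by
    have e1 : t * (s * (t * x)) = (t * (s * t)) * x := by rw [mul_assoc, mul_assoc]
    rw [e1, hbr, mul_assoc, mul_assoc]
  simp only [add_mul, mul_add, smul_mul_assoc, mul_smul_comm, smul_smul, smul_add, one_mul]
  rw [hbr' P, hsq' P]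
  simp only [hsP, h1, hPP, mul_add, mul_smul_comm, smul_smul, smul_add]
  match_scalars <;> field_simp <;> ring

lemma step_main (q u v a a' b : ℝ) (P Q t s : A)
    (hq : q ≠ 0) (ha0 : a ≠ 0) (hb0 : b ≠ 0)
    (hQQ : Q * Q = Q) (hPP : P * P = P)
    (hmid : P = Q * (a⁻¹ • (v • (1:A) + a' • s)) * Q)
    (htQ : t * Q = Q * t)
    (hsq : t * t = (q - q⁻¹) • t + 1)
    (hbr : t * (s * t) = s * (t * s))
    (hPs : P * s = q • P) (hsP : s * P = q • P)
    (hv : v = q * u) (ha : a = q * a' + v) (hb : b = q * a + u) :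
    (P * (b⁻¹ • (u • (1:A) + a • t)) * P) * (P * (b⁻¹ • (u • (1:A) + a • t)) * P) =
        P * (b⁻¹ • (u • (1:A) + a • t)) * P ∧
      (P * (b⁻¹ • (u • (1:A) + a • t)) * P) * t = q • (P * (b⁻¹ • (u • (1:A) + a • t)) * P) ∧
      t * (P * (b⁻¹ • (u • (1:A) + a • t)) * P) = q • (P * (b⁻¹ • (u • (1:A) + a • t)) * P) := by
  have hQX : ∀ x : A, Q * ((u • (1:A) + a • t) * x) = (u • (1:A) + a • t) * (Q * x) := by
    intro x
    simp only [add_mul, smul_mul_assoc, one_mul, mul_add, mul_smul_comm]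
    rw [← mul_assoc Q t x, ← htQ, mul_assoc]
  have hPQ : P * Q = P := by
    rw [hmid, mul_assoc (Q * (a⁻¹ • (v • (1:A) + a' • s))) Q Q, hQQ]
  have hQP : Q * P = P := by
    rw [hmid, ← mul_assoc, ← mul_assoc, hQQ]
  have hPQ' : ∀ x : A, P * (Q * x) = P * x := fun x => by rw [← mul_assoc, hPQ]
  have hPP' : ∀ x : A, P * (P * x) = P * x := fun x => by rw [← mul_assoc, hPP]
  have hP : P = a⁻¹ • (Q * ((v • (1:A) + a' • s) * Q)) := by
    rw [hmid]; simp only [mul_smul_comm, smul_mul_assoc, mul_assoc]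
  have hPt : P * t = a⁻¹ • (Q * ((v • (1:A) + a' • s) * (t * Q))) := by
    rw [hmid]
    simp only [mul_smul_comm, smul_mul_assoc, mul_assoc]
    rw [← htQ]
  have htP : t * P = a⁻¹ • (Q * (t * ((v • (1:A) + a' • s) * Q))) := by
    rw [hmid]
    simp only [mul_smul_comm, smul_mul_assoc, mul_assoc]
    rw [← mul_assoc t Q, htQ, mul_assoc]
  refine ⟨?_, ?_, ?_⟩
  · -- idempotence
    have key1 : P * ((u • (1:A) + a • t) * (P * ((u • (1:A) + a • t) * P))) =
        (a⁻¹ * (a * b)) • (P * ((u • (1:A) + a • t) * P)) := by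
      nth_rewrite 2 [hP]
      simp only [mul_smul_comm, smul_mul_assoc, smul_smul, mul_assoc]
      rw [hQX, hQP, ← hQX, hPQ']
      rw [coreI q u v a a' b P t s hPP hsq hbr hPs hsP hv ha hb hq, smul_smul]
    simp only [mul_smul_comm, smul_mul_assoc, smul_smul, mul_assoc]
    rw [hPP', key1, smul_smul]
    congr 1
    field_simp
  · -- right absorption
    simp only [mul_smul_comm, smul_mul_assoc, smul_smul, mul_assoc]
    rw [hPt]
    simp only [mul_smul_comm, smul_smul]
    rw [← hQX, hPQ']
    rw [coreR q u v a a' P Q t s hPQ hsq hbr hPs hv ha hq]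
    nth_rewrite 3 [hP]
    simp only [mul_smul_comm, smul_smul]
    rw [← hQX, hPQ']
    congr 1
    ring
  · -- left absorption
    simp only [mul_smul_comm, smul_mul_assoc, smul_smul, mul_assoc]
    rw [← mul_assoc t P, htP]
    simp only [mul_smul_comm, smul_mul_assoc, smul_smul, mul_assoc]
    rw [hQX, hQP]
    rw [coreL q u v a a' P Q t s hQP hsq hbr hsP hv ha hq]
    nth_rewrite 2 [hP]
    simp only [mul_smul_comm, smul_mul_assoc, smul_smul, mul_assoc]
    rw [hQX, hQP]
    congr 1
    ring

end Core

theorem symP_idem_absorb {A : Type*} [Ring A] [Algebra ℝ A] (q : ℝ) (hq : q ≠ 0)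
    (hqn : ∀ m : ℕ, 1 ≤ m → qnum q m ≠ 0) (T : ℕ → A)
    (hbraid : ∀ i : ℕ, 1 ≤ i → T i * T (i + 1) * T i = T (i + 1) * T i * T (i + 1))
    (hfar : ∀ i j : ℕ, 1 ≤ i → i + 2 ≤ j → T i * T j = T j * T i)
    (hhecke : ∀ i : ℕ, 1 ≤ i → (T i - q • (1 : A)) * (T i + q⁻¹ • (1 : A)) = 0) :
    (∀ l : ℕ, symP q T l * symP q T l = symP q T l) ∧
      (∀ l m : ℕ, 1 ≤ m → m ≤ l →
        symP q T (l + 1) * T m = q • symP q T (l + 1) ∧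
          T m * symP q T (l + 1) = q • symP q T (l + 1)) := by
  have hd : q - q⁻¹ ≠ 0 := hd_of' q (hqn 1 le_rfl)
  have Tsq : ∀ i : ℕ, 1 ≤ i → T i * T i = (q - q⁻¹) • T i + 1 := by
    intro i hi
    have h := hhecke i hi
    have key : (T i - q • (1:A)) * (T i + q⁻¹ • (1:A)) = T i * T i - ((q - q⁻¹) • T i + 1) := by
      simp only [sub_mul, mul_add, smul_mul_assoc, mul_smul_comm, smul_smul, one_mul, mul_one,
        mul_inv_cancel₀ hq, one_smul]
      match_scalars <;> (field_simp; try ring)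
    rw [key] at h
    exact sub_eq_zero.mp h
  have symP_one : symP q T 1 = 1 := by
    simp [symP, qnum_zero', qnum_one' q hd]
  have hcomm : ∀ (x : A) (j : ℕ), (∀ i, 1 ≤ i → i + 1 ≤ j → x * T i = T i * x) →
      x * symP q T j = symP q T j * x := by
    intro x j
    induction j with
    | zero => intro _; show x * 1 = 1 * x; rw [one_mul, mul_one]
    | succ j ih =>
      intro h
      rcases Nat.eq_zero_or_pos j with hj | hj
      · subst hj; rw [symP_one, one_mul, mul_one]
      · have h1 : x * symP q T j = symP q T j * x := ih fun i hi hij => h i hi (by omega)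
        have h2 : x * T j = T j * x := h j hj le_rfl
        have hs : symP q T (j+1) = symP q T j *
            ((qnum q (j+1))⁻¹ • ((q ^ (-(j:ℤ)) : ℝ) • (1:A) + qnum q j • T j)) * symP q T j := rfl
        have h3 : x * ((qnum q (j+1))⁻¹ • ((q ^ (-(j:ℤ)) : ℝ) • (1:A) + qnum q j • T j)) =
            ((qnum q (j+1))⁻¹ • ((q ^ (-(j:ℤ)) : ℝ) • (1:A) + qnum q j • T j)) * x := by
          simp only [mul_smul_comm, smul_mul_assoc, mul_add, add_mul, mul_one, one_mul, h2]
        rw [hs, ← mul_assoc, ← mul_assoc, h1, mul_assoc (symP q T j) x _, h3,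
          ← mul_assoc, mul_assoc _ x (symP q T j), h1, ← mul_assoc]
  have key : ∀ l : ℕ,
      (symP q T l * symP q T l = symP q T l ∧
        ∀ m, 1 ≤ m → m + 1 ≤ l →
          symP q T l * T m = q • symP q T l ∧ T m * symP q T l = q • symP q T l) ∧
      (symP q T (l+1) * symP q T (l+1) = symP q T (l+1) ∧
        ∀ m, 1 ≤ m → m + 1 ≤ l + 1 →
          symP q T (l+1) * T m = q • symP q T (l+1) ∧
            T m * symP q T (l+1) = q • symP q T (l+1)) := by
    intro l
    induction l with
    | zero =>
      refine ⟨⟨?_, fun m hm h0 => by omega⟩, ⟨?_, fun m hm h0 => by omega⟩⟩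
      · show (1:A) * 1 = 1; rw [one_mul]
      · rw [symP_one, one_mul]
    | succ l ih =>
      obtain ⟨⟨hQQ, absQ⟩, ⟨hPP, absP⟩⟩ := ih
      refine ⟨⟨hPP, absP⟩, ?_⟩
      have hsucc2 : symP q T (l+2) = symP q T (l+1) *
          ((qnum q (l+2))⁻¹ • ((q ^ (-((l+1:ℕ):ℤ)) : ℝ) • (1:A) + qnum q (l+1) • T (l+1))) *
          symP q T (l+1) := rfl
      have easy : ∀ m, 1 ≤ m → m ≤ l →
          symP q T (l+2) * T m = q • symP q T (l+2) ∧
            T m * symP q T (l+2) = q • symP q T (l+2) := by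
        intro m hm hml
        obtain ⟨e1, e2⟩ := absP m hm (by omega)
        constructor
        · rw [hsucc2, mul_assoc, mul_assoc, e1]
          simp only [smul_mul_assoc, mul_smul_comm, smul_smul, mul_assoc]
        · rw [hsucc2, ← mul_assoc, ← mul_assoc, e2]
          simp only [smul_mul_assoc, mul_smul_comm, smul_smul, mul_assoc]
          match_scalars <;> ring
      rcases Nat.eq_zero_or_pos l with hl | hl
      · subst hl
        have h2eq : symP q T 2 = (qnum q 2)⁻¹ • ((q⁻¹:ℝ) • (1:A) + T 1) := by
          rw [hsucc2, symP_one, one_mul, mul_one, qnum_one' q hd, one_smul]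
          norm_num
        have ht := Tsq 1 le_rfl
        have hb2 : qnum q 2 = q + q⁻¹ := by
          rw [show (2:ℕ) = 1 + 1 from rfl, qnum_succ' q hq hd 1, qnum_one' q hd]
          norm_num
        have h1q : q^2 + 1 ≠ 0 := by positivity
        have hb2' : (qnum q 2)⁻¹ = q / (q^2 + 1) := by
          rw [hb2, show q + q⁻¹ = (q^2+1)/q by field_simp, inv_div]
        constructor
        · rw [h2eq]
          simp only [smul_mul_assoc, mul_smul_comm, smul_smul, mul_add, add_mul, one_mul,
            mul_one, smul_add]
          rw [ht]
          match_scalars <;> (rw [hb2']; field_simp [h1q]; try ring)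
        · intro m hm hm2
          have : m = 1 := by omega
          subst this
          rw [h2eq]
          constructor
          · simp only [smul_mul_assoc, mul_smul_comm, smul_smul, mul_add, add_mul, one_mul,
              mul_one, smul_add]
            rw [ht]
            match_scalars <;> (rw [hb2']; field_simp [h1q]; try ring)
          · simp only [smul_mul_assoc, mul_smul_comm, smul_smul, mul_add, add_mul, one_mul,
              mul_one, smul_add]
            rw [ht]
            match_scalars <;> (rw [hb2']; field_simp [h1q]; try ring)
      · have htQ : T (l+1) * symP q T l = symP q T l * T (l+1) :=
          hcomm (T (l+1)) l (fun i hi hij => (hfar i (l+1) hi (by omega)).symm)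
        have hbr : T (l+1) * (T l * T (l+1)) = T l * (T (l+1) * T l) := by
          rw [← mul_assoc, ← hbraid l hl, mul_assoc]
        have hmid : symP q T (l+1) = symP q T l *
            ((qnum q (l+1))⁻¹ • ((q ^ (-(l:ℤ)) : ℝ) • (1:A) + qnum q l • T l)) *
            symP q T l := rfl
        obtain ⟨hPs, hsP⟩ := absP l hl (by omega)
        have HS := step_main q (q ^ (-((l+1:ℕ):ℤ))) (q ^ (-(l:ℤ))) (qnum q (l+1)) (qnum q l)
          (qnum q (l+2)) (symP q T (l+1)) (symP q T l) (T (l+1)) (T l) hq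
          (hqn (l+1) (by omega)) (hqn (l+2) (by omega)) hQQ hPP hmid htQ
          (Tsq (l+1) (by omega)) hbr hPs hsP (zpow_shift' q hq l) (qnum_succ' q hq hd l)
          (qnum_succ' q hq hd (l+1))
        rw [hsucc2]
        refine ⟨HS.1, ?_⟩
        intro m hm hml
        rcases Nat.lt_or_ge m (l+1) with hcase | hcase
        · have := easy m hm (by omega)
          rw [hsucc2] at this
          exact this
        · have : m = l + 1 := by omega
          subst this
          exact ⟨HS.2.1, HS.2.2⟩
  refine ⟨fun l => (key l).1.1, fun l m h1 h2 => (key l).2.2 m h1 (by omega)⟩
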